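/- arXiv:1603.07718 — 3 statements merged into one kernel-verified Lean document; each statement's English description precedes it below -/
import Mathlib

section
/- Let L/k be a Galois field extension of degree 4 whose Galois group is cyclic, and let K be the unique intermediate field with [K:k] = 2. Then the norm map N : (L ⊗_k L)ˣ → (K ⊗_k L)ˣ of the finite free (K ⊗_k L)-algebra L ⊗_k L is surjective. -/
open TensorProduct

lemma stmt2_norm_prod {R : Type*} [CommRing R] (a b : R) :
    Algebra.norm R ((a, b) : R × R) = a * b := by
  rw [Algebra.norm_eq_matrix_det (Module.Basis.finTwoProd R), Matrix.det_fin_two]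
  simp [Algebra.leftMulMatrix_apply, LinearMap.toMatrix_apply, Module.Basis.coe_finTwoProd_repr,
    Module.Basis.finTwoProd_zero, Module.Basis.finTwoProd_one]

lemma stmt2_bij {k L M : Type} [Field k] [Field L] [Algebra k L]
    [AddCommGroup M] [Module k M] {n : ℕ}
    (B : Module.Basis (Fin n) k M) (F : (L ⊗[k] M) →ₗ[L] (Fin n → L))
    (g : Fin n → M → L)
    (hF : ∀ j i, F ((1:L) ⊗ₜ[k] B j) i = g i (B j))
    (hrows : ∀ v : Fin n → L, (∀ j, ∑ i, v i * g i (B j) = 0) → v = 0) :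
    Function.Bijective F := by
  classical
  set A := LinearMap.toMatrix (B.baseChange L) (Pi.basisFun L (Fin n)) F with hAdef
  have hA : ∀ i j, A i j = g i (B j) := by
    intro i j
    rw [hAdef, LinearMap.toMatrix_apply, Module.Basis.baseChange_apply]
    simp [hF]
  have hdet : IsUnit A.det := by
    rw [isUnit_iff_ne_zero]
    intro h0
    obtain ⟨v, hv, hva⟩ := Matrix.exists_vecMul_eq_zero_iff.mpr h0
    refine hv (hrows v fun j => ?_)
    have := congrFun hva j
    simpa [Matrix.vecMul, dotProduct, hA] using this
  have hb := (LinearEquiv.ofIsUnitDet hdet).bijective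
  have h2 : ⇑(LinearEquiv.ofIsUnitDet hdet) = ⇑F := by
    have := LinearEquiv.coe_ofIsUnitDet hdet
    exact congrArg (fun (f : (L ⊗[k] M) →ₗ[L] (Fin n → L)) => ⇑f) this
  rwa [h2] at hb

def stmt2_regroup (L : Type) [CommRing L] :
    (Fin 4 → L) ≃+* (Fin 2 → L) × (Fin 2 → L) where
  toFun x := (![x 0, x 1], ![x 2, x 3])
  invFun p := ![p.1 0, p.1 1, p.2 0, p.2 1]
  left_inv x := by
    funext m
    fin_cases m <;> simp
  right_inv p := by
    refine Prod.ext ?_ ?_ <;> funext j <;> fin_cases j <;> simp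
  map_add' x y := by
    refine Prod.ext ?_ ?_ <;> funext j <;> fin_cases j <;> simp
  map_mul' x y := by
    refine Prod.ext ?_ ?_ <;> funext j <;> fin_cases j <;> simp

theorem stmt2 (k K L : Type) [Field k] [Field K] [Field L]
    [Algebra k K] [Algebra k L] [Algebra K L] [IsScalarTower k K L]
    [IsGalois k L] (hdeg : Module.finrank k L = 4)
    [IsCyclic (L ≃ₐ[k] L)]
    (hK : Module.finrank k K = 2) :
    letI : Algebra (K ⊗[k] L) (L ⊗[k] L) :=
      ((Algebra.TensorProduct.map (IsScalarTower.toAlgHom k K L)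
        (AlgHom.id k L)).toRingHom).toAlgebra
    ∀ y : (K ⊗[k] L)ˣ, ∃ x : (L ⊗[k] L)ˣ,
      Algebra.norm (K ⊗[k] L) (x : L ⊗[k] L) = (y : K ⊗[k] L) := by
  letI inst : Algebra (K ⊗[k] L) (L ⊗[k] L) :=
    ((Algebra.TensorProduct.map (IsScalarTower.toAlgHom k K L)
      (AlgHom.id k L)).toRingHom).toAlgebra
  intro y
  classical
  have hFDL : FiniteDimensional k L := .of_finrank_pos (by omega)
  have hFDK : FiniteDimensional k K := .of_finrank_pos (by omega)
  obtain ⟨σ, hσ⟩ := IsCyclic.exists_generator (α := L ≃ₐ[k] L)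
  have hcard : Fintype.card (L ≃ₐ[k] L) = 4 := by
    rw [← Nat.card_eq_fintype_card, IsGalois.card_aut_eq_finrank]; exact hdeg
  have hord : orderOf σ = 4 := by
    rw [orderOf_eq_card_of_forall_mem_zpowers hσ, Nat.card_eq_fintype_card]; exact hcard
  have hKL : Module.finrank K L = 2 := by
    have h := Module.finrank_mul_finrank k K L
    rw [hdeg, hK] at h; omega
  haveI : IsGalois K L := IsGalois.tower_top_of_isGalois k K L
  haveI : FiniteDimensional K L := FiniteDimensional.right k K L
  have hcard2 : Fintype.card (L ≃ₐ[K] L) = 2 := by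
    rw [← Nat.card_eq_fintype_card, IsGalois.card_aut_eq_finrank]; exact hKL
  set ι : K →+* L := algebraMap K L with hι
  have hσ2ne : σ ^ 2 ≠ 1 := by
    intro h
    have h4 := orderOf_dvd_of_pow_eq_one h
    rw [hord] at h4
    have := Nat.le_of_dvd (by norm_num) h4
    omega
  -- σ² fixes K pointwise
  have hfix : ∀ c : K, σ (σ (ι c)) = ι c := by
    obtain ⟨τ', hτ'⟩ : ∃ τ' : L ≃ₐ[K] L, τ' ≠ 1 := by
      by_contra h
      push_neg at h
      have h1 : Fintype.card (L ≃ₐ[K] L) ≤ 1 :=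
        Fintype.card_le_one_iff.mpr fun a b => by rw [h a, h b]
      omega
    set τ : L ≃ₐ[k] L := τ'.restrictScalars k with hτdef
    have hτι : ∀ c : K, τ (ι c) = ι c := fun c => τ'.commutes c
    have hτne : τ ≠ 1 := by
      intro h
      apply hτ'
      ext x
      have := congrArg (fun f : L ≃ₐ[k] L => f x) h
      simpa [hτdef] using this
    have hτ2 : τ ^ 2 = 1 := by
      have h1 : τ' ^ Fintype.card (L ≃ₐ[K] L) = 1 := pow_card_eq_one
      rw [hcard2] at h1
      ext x
      rw [pow_two, AlgEquiv.mul_apply, AlgEquiv.one_apply]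
      have := congrArg (fun f : L ≃ₐ[K] L => f x) h1
      simpa [pow_two, AlgEquiv.mul_apply, hτdef] using this
    obtain ⟨n, hn⟩ := mem_powers_iff_mem_zpowers.mpr (hσ τ)
    replace hn : σ ^ n = τ := hn
    have h2n : σ ^ (2 * n) = 1 := by
      rw [mul_comm, pow_mul, hn, hτ2]
    have hdvd : 4 ∣ 2 * n := by rw [← hord]; exact orderOf_dvd_of_pow_eq_one h2n
    obtain ⟨m, hm⟩ : ∃ m, n = 2 * m := ⟨n/2, by omega⟩
    have hmodd : ¬ 2 ∣ m := by
      rintro ⟨p, hp⟩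
      apply hτne
      rw [← hn, hm, hp, show 2*(2*p) = 4*p by ring, pow_mul, ← hord, pow_orderOf_eq_one, one_pow]
    obtain ⟨p, hp⟩ : ∃ p, m = 2*p+1 := ⟨m/2, by omega⟩
    have hτσ2 : τ = σ ^ 2 := by
      rw [← hn, hm, hp, show 2*(2*p+1) = 4*p + 2 by ring, pow_add, pow_mul, ← hord,
        pow_orderOf_eq_one, one_pow, one_mul]
    intro c
    have hc := hτι c
    rw [hτσ2] at hc
    simpa [pow_two, AlgEquiv.mul_apply] using hc
  -- σ moves some element of K
  have hmove : ¬ ∀ c : K, σ (ι c) = ι c := by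
    intro h
    apply hσ2ne
    let σ' : L ≃ₐ[K] L := AlgEquiv.ofRingEquiv (f := σ.toRingEquiv) (fun c => h c)
    have hσ'2 : σ' ^ 2 = 1 := by
      have h1 : σ' ^ Fintype.card (L ≃ₐ[K] L) = 1 := pow_card_eq_one
      rwa [hcard2] at h1
    ext x
    rw [pow_two, AlgEquiv.mul_apply, AlgEquiv.one_apply]
    have := congrArg (fun f : L ≃ₐ[K] L => f (σ' x)) hσ'2
    simpa [pow_two, AlgEquiv.mul_apply, σ'] using this
  
  set ιa : K →ₐ[k] L := IsScalarTower.toAlgHom k K L with hιa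
  -- the two model maps
  let Φ : (L ⊗[k] L) →ₐ[L] (Fin 4 → L) :=
    Algebra.TensorProduct.lift (Algebra.ofId L (Fin 4 → L))
      (Pi.algHom _ _ fun i : Fin 4 => (σ ^ (i : ℕ)).toAlgHom)
      (fun _ _ => Commute.all _ _)
  have hΦ : ∀ (a b : L), Φ (a ⊗ₜ[k] b) = fun i : Fin 4 => a * (σ ^ (i:ℕ)) b := by
    intro a b
    funext i
    simp [Φ, Algebra.TensorProduct.lift_tmul, Algebra.ofId_apply]
  let Ψ : (L ⊗[k] K) →ₐ[L] (Fin 2 → L) :=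
    Algebra.TensorProduct.lift (Algebra.ofId L (Fin 2 → L))
      (Pi.algHom _ _ fun i : Fin 2 => (σ ^ (i : ℕ)).toAlgHom.comp ιa)
      (fun _ _ => Commute.all _ _)
  have hΨ : ∀ (b : L) (c : K), Ψ (b ⊗ₜ[k] c) = fun j : Fin 2 => b * (σ ^ (j:ℕ)) (ι c) := by
    intro b c
    funext j
    simp [Ψ, Algebra.TensorProduct.lift_tmul, Algebra.ofId_apply, hιa, hι]
  -- bases
  let BL : Module.Basis (Fin 4) k L := Module.finBasisOfFinrankEq k L hdeg
  let BK : Module.Basis (Fin 2) k K := Module.finBasisOfFinrankEq k K hK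
  -- row independence for Φ
  have hrowsL : ∀ v : Fin 4 → L, (∀ j, ∑ i, v i * (σ ^ (i:ℕ)) (BL j) = 0) → v = 0 := by
    intro v hv
    let h : Fin 4 → (L →* L) := fun i =>
      ((σ ^ (i : ℕ)).toAlgHom : L →ₐ[k] L).toRingHom.toMonoidHom
    have hinj : Function.Injective h := by
      intro i j hij
      have hσij : σ ^ (i:ℕ) = σ ^ (j:ℕ) := by
        ext x; exact DFunLike.congr_fun hij x
      exact Fin.ext (pow_injOn_Iio_orderOf (by rw [hord]; exact i.isLt)
        (by rw [hord]; exact j.isLt) hσij)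
    have hli := (linearIndependent_monoidHom L L).comp h hinj
    have hFl : (∑ i : Fin 4, v i • ((σ ^ (i:ℕ)).toLinearMap : L →ₗ[k] L)) = 0 :=
      BL.ext fun j => by
        simpa [LinearMap.sum_apply, LinearMap.smul_apply, smul_eq_mul] using hv j
    have hsum : (∑ i : Fin 4, v i • (⇑(h i) : L → L)) = 0 := by
      funext x
      have := congrArg (fun f : L →ₗ[k] L => f x) hFl
      simpa [LinearMap.sum_apply, LinearMap.smul_apply, smul_eq_mul, h] using this
    funext i
    exact Fintype.linearIndependent_iff.mp hli v hsum i
  -- row independence for Ψ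
  have hrowsK : ∀ v : Fin 2 → L, (∀ j, ∑ i, v i * (σ ^ (i:ℕ)) (ι (BK j)) = 0) → v = 0 := by
    intro v hv
    let h : Fin 2 → (K →* L) := fun i =>
      (((σ ^ (i : ℕ)).toAlgHom.comp ιa : K →ₐ[k] L)).toRingHom.toMonoidHom
    have key : h 0 ≠ h 1 := by
      intro h01
      apply hmove
      intro c
      have := DFunLike.congr_fun h01 c
      simpa [h, hιa, hι] using this.symm
    have hinj : Function.Injective h := by
      intro i j hij
      fin_cases i <;> fin_cases j <;>
        first
          | rfl
          | exact absurd hij key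
          | exact absurd hij.symm key
    have hli := (linearIndependent_monoidHom K L).comp h hinj
    have hFl : (∑ i : Fin 2,
        v i • (((σ ^ (i:ℕ)).toLinearMap.comp ιa.toLinearMap) : K →ₗ[k] L)) = 0 :=
      BK.ext fun j => by
        simpa [LinearMap.sum_apply, LinearMap.smul_apply, smul_eq_mul, hιa, hι] using hv j
    have hsum : (∑ i : Fin 2, v i • (⇑(h i) : K → L)) = 0 := by
      funext x
      have := congrArg (fun f : K →ₗ[k] L => f x) hFl
      simpa [LinearMap.sum_apply, LinearMap.smul_apply, smul_eq_mul, h, hιa, hι] using this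
    funext i
    exact Fintype.linearIndependent_iff.mp hli v hsum i
  -- bijectivity
  have hΦbij : Function.Bijective Φ :=
    stmt2_bij BL Φ.toLinearMap (fun i => ⇑(σ ^ (i:ℕ)))
      (fun j i => by simp only [AlgHom.toLinearMap_apply]; rw [hΦ]; simp) hrowsL
  have hΨbij : Function.Bijective Ψ :=
    stmt2_bij BK Ψ.toLinearMap (fun i c => (σ ^ (i:ℕ)) (ι c))
      (fun j i => by simp only [AlgHom.toLinearMap_apply]; rw [hΨ]; simp) hrowsK
  let Φe : (L ⊗[k] L) ≃ₐ[L] (Fin 4 → L) := AlgEquiv.ofBijective Φ hΦbij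
  let Ψe : (L ⊗[k] K) ≃ₐ[L] (Fin 2 → L) := AlgEquiv.ofBijective Ψ hΨbij
  let C1 : (L ⊗[k] L) ≃+* (L ⊗[k] L) := (Algebra.TensorProduct.comm k L L).toRingEquiv
  let C2 : (L ⊗[k] K) ≃+* (K ⊗[k] L) := (Algebra.TensorProduct.comm k L K).toRingEquiv
  let W : (Fin 2 → L) ≃+* (K ⊗[k] L) := Ψe.symm.toRingEquiv.trans C2
  let E : (L ⊗[k] L) ≃+* (K ⊗[k] L) × (K ⊗[k] L) :=
    C1.trans (Φe.toRingEquiv.trans ((stmt2_regroup L).trans (RingEquiv.prodCongr W W)))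
  have halg : ∀ (c : K) (b : L),
      algebraMap (K ⊗[k] L) (L ⊗[k] L) (c ⊗ₜ[k] b) = (ι c) ⊗ₜ[k] b := by
    intro c b
    show (Algebra.TensorProduct.map (IsScalarTower.toAlgHom k K L) (AlgHom.id k L))
      (c ⊗ₜ[k] b) = _
    simp [Algebra.TensorProduct.map_tmul, hι]
  have hσ2c : ∀ c : K, (σ ^ (2:ℕ)) (ι c) = ι c := by
    intro c
    rw [pow_two, AlgEquiv.mul_apply]
    exact hfix c
  have hσ3c : ∀ c : K, (σ ^ (3:ℕ)) (ι c) = σ (ι c) := by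
    intro c
    rw [pow_succ', AlgEquiv.mul_apply, hσ2c]
  have hEdiag : ∀ z : K ⊗[k] L, E (algebraMap (K ⊗[k] L) (L ⊗[k] L) z) = (z, z) := by
    intro z
    induction z using TensorProduct.induction_on with
    | zero => simp; rfl
    | tmul c b =>
      rw [halg]
      have hW : ∀ p : Fin 2 → L, p = (fun j : Fin 2 => b * (σ ^ (j:ℕ)) (ι c)) → W p = c ⊗ₜ[k] b := by
        intro p hp
        have h2 : Ψe.symm p = b ⊗ₜ[k] c := by
          rw [AlgEquiv.symm_apply_eq]
          rw [show Ψe (b ⊗ₜ[k] c) = Ψ (b ⊗ₜ[k] c) from rfl, hΨ, hp]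
        show C2 (Ψe.symm p) = _
        rw [h2]
        simp [C2, Algebra.TensorProduct.comm_tmul]
      show (RingEquiv.prodCongr W W) ((stmt2_regroup L) (Φe (C1 (ι c ⊗ₜ[k] b)))) =
        (c ⊗ₜ[k] b, c ⊗ₜ[k] b)
      rw [show C1 ((ι c) ⊗ₜ[k] b) = b ⊗ₜ[k] (ι c) from by
        simp [C1, Algebra.TensorProduct.comm_tmul]]
      rw [show Φe (b ⊗ₜ[k] (ι c)) = (fun i : Fin 4 => b * (σ ^ (i:ℕ)) (ι c)) from hΦ b (ι c)]
      have hr : (stmt2_regroup L) (fun i : Fin 4 => b * (σ ^ (i:ℕ)) (ι c)) =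
          ((fun j : Fin 2 => b * (σ ^ (j:ℕ)) (ι c)), (fun j : Fin 2 => b * (σ ^ (j:ℕ)) (ι c))) := by
        refine Prod.ext ?_ ?_ <;> funext j <;> fin_cases j <;>
          simp [stmt2_regroup, show ((0:Fin 4):ℕ) = 0 from rfl, show ((1:Fin 4):ℕ) = 1 from rfl,
            show ((2:Fin 4):ℕ) = 2 from rfl, show ((3:Fin 4):ℕ) = 3 from rfl,
            show ((0:Fin 2):ℕ) = 0 from rfl, show ((1:Fin 2):ℕ) = 1 from rfl, hσ2c, hσ3c, hfix]
      rw [hr]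
      show (W _, W _) = _
      rw [hW _ rfl]
    | add x z hx hz =>
      rw [map_add, map_add, hx, hz, Prod.mk_add_mk]
  have he : (algebraMap (K ⊗[k] L) ((K ⊗[k] L) × (K ⊗[k] L))).comp
        ((RingEquiv.refl (K ⊗[k] L) : (K ⊗[k] L) ≃+* (K ⊗[k] L)) :
          (K ⊗[k] L) →+* (K ⊗[k] L))
      = (E : (L ⊗[k] L) →+* (K ⊗[k] L) × (K ⊗[k] L)).comp
          (algebraMap (K ⊗[k] L) (L ⊗[k] L)) := by
    refine RingHom.ext fun z => ?_
    have := hEdiag z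
    simpa using this.symm
  refine ⟨⟨E.symm ((y : K ⊗[k] L), 1), E.symm ((↑y⁻¹ : K ⊗[k] L), 1), ?_, ?_⟩, ?_⟩
  · have hmul : (((y : K ⊗[k] L), (1 : K ⊗[k] L)) : (K ⊗[k] L) × (K ⊗[k] L)) *
        ((↑y⁻¹ : K ⊗[k] L), 1) = 1 := by
      rw [Prod.mk_mul_mk]
      simp
    rw [← map_mul, hmul, map_one]
  · have hmul : (((↑y⁻¹ : K ⊗[k] L), (1 : K ⊗[k] L)) : (K ⊗[k] L) × (K ⊗[k] L)) *
        ((y : K ⊗[k] L), 1) = 1 := by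
      rw [Prod.mk_mul_mk]
      simp
    rw [← map_mul, hmul, map_one]
  · show Algebra.norm (K ⊗[k] L) (E.symm ((y : K ⊗[k] L), 1)) = y
    rw [Algebra.norm_eq_of_equiv_equiv (RingEquiv.refl (K ⊗[k] L)) E he]
    rw [RingEquiv.apply_symm_apply]
    rw [stmt2_norm_prod]
    simp
end

section
/- Let L/k be a finite separable field extension of prime degree p and let β ∈ kˣ. Then there exists a finite separable field extension F/k with [F:k] ∈ {1, p} such that (i) β = N_{(L⊗_kF)/F}(x) for some unit x of L ⊗_k F, and (ii) for every finite separable field extension F'/k with β = N_{(L⊗_kF')/F'}(x') for some unit x' of L ⊗_k F', the degree [F:k] divides [F':k]. -/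
open TensorProduct

/-- `β ∈ k` is a norm from `(L ⊗[k] F)ˣ` to `Fˣ`, where `L ⊗[k] F` is regarded as an
`F`-algebra via the right tensor factor. -/
def IsBaseNorm (k L F : Type) [Field k] [Field L] [Field F]
    [Algebra k L] [Algebra k F] (β : k) : Prop :=
  letI : Algebra F (L ⊗[k] F) :=
    (Algebra.TensorProduct.includeRight (R := k) (A := L) (B := F)).toRingHom.toAlgebra
  ∃ x : (L ⊗[k] F)ˣ, Algebra.norm F (x : L ⊗[k] F) = algebraMap k F β

open Polynomial Matrix Module in
lemma aux_det_one_add_nilpotent {k : Type*} [Field k] {m : Type*} [Fintype m] [DecidableEq m]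
    {A : Matrix m m k} (h : IsNilpotent A) : (1 + A).det = 1 := by
  have hu : IsUnit (charpolyRev (-A)) := isUnit_charpolyRev_of_isNilpotent h.neg
  obtain ⟨r, -, hCr⟩ := Polynomial.isUnit_iff.mp hu
  have hr : r = 1 := by
    have := eval_charpolyRev (M := -A)
    rw [← hCr] at this
    simpa using this
  have h1 : charpolyRev (-A) = 1 := by rw [← hCr, hr, Polynomial.C_1]
  have : eval 1 (charpolyRev (-A)) = (1 + A).det := by
    rw [charpolyRev, ← coe_evalRingHom, RingHom.map_det]
    congr 1
    ext i j
    rcases eq_or_ne i j with rfl | hij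
    · simp [Matrix.one_apply]
    · simp [Matrix.one_apply, hij]
  rw [h1] at this
  simpa using this.symm

open Matrix Module in
lemma aux_det_restrict_toLin' {k F : Type*} [Field k] [Field F] [Algebra k F]
    [FiniteDimensional k F] {n : Type*} [Fintype n] [DecidableEq n] (M : Matrix n n F) :
    LinearMap.det ((Matrix.toLin' M).restrictScalars k) = Algebra.norm k M.det := by
  classical
  induction M using Matrix.diagonal_transvection_induction with
  | hdiag D _ =>
    let b := Module.finBasis k F
    let e : (Σ _ : n, Fin (finrank k F)) ≃ Fin (finrank k F) × n :=
      (Equiv.sigmaEquivProd n (Fin (finrank k F))).trans (Equiv.prodComm _ _)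
    let b' : Basis (Fin (finrank k F) × n) k (n → F) :=
      (Pi.basis (fun _ : n => b)).reindex e
    have hM : LinearMap.toMatrix b' b' ((Matrix.toLin' (Matrix.diagonal D)).restrictScalars k)
        = Matrix.blockDiagonal (fun j => Algebra.leftMulMatrix b (D j)) := by
      ext ⟨a, i⟩ ⟨c, j⟩
      rw [LinearMap.toMatrix_apply]
      have hb' : b' (c, j) = Pi.single j (b c) := by
        simp [b', e, Pi.basis_apply]
      rw [hb']
      have happ : (Matrix.toLin' (Matrix.diagonal D)).restrictScalars k (Pi.single j (b c))
          = Pi.single j (D j * b c) := by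
        funext i'
        simp only [LinearMap.restrictScalars_apply, Matrix.toLin'_apply,
          Matrix.mulVec_diagonal]
        rcases eq_or_ne i' j with rfl | h
        · simp
        · simp [Pi.single_apply, h]
      rw [happ]
      have : b'.repr (Pi.single j (D j * b c)) (a, i)
          = (Pi.basis (fun _ : n => b)).repr (Pi.single j (D j * b c)) ⟨i, a⟩ :=
        Basis.repr_reindex_apply _ _ _ _
      rw [this, Pi.basis_repr, Matrix.blockDiagonal_apply]
      rcases eq_or_ne i j with rfl | h
      · simp [Algebra.leftMulMatrix_eq_repr_mul]
      · simp [Pi.single_apply, h]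
    rw [← LinearMap.det_toMatrix b', hM, Matrix.det_blockDiagonal]
    simp only [← Algebra.norm_eq_matrix_det b, Matrix.det_diagonal, map_prod]
  | htransvec t =>
    rw [t.det, _root_.map_one]
    have hE : Matrix.single t.i t.j t.c * Matrix.single t.i t.j t.c = 0 := by
      rw [Matrix.single_mul_single_of_ne (h := t.hij.symm)]
    have hTM : t.toMatrix = 1 + Matrix.single t.i t.j t.c := by
      cases t with
      | mk i j hij c => rw [Matrix.TransvectionStruct.toMatrix_mk, Matrix.transvection]
    set N : (n → F) →ₗ[k] (n → F) :=
      (Matrix.toLin' (Matrix.single t.i t.j t.c)).restrictScalars k with hN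
    have hNN : N ∘ₗ N = 0 := by
      rw [hN, ← LinearMap.restrictScalars_comp, ← Matrix.toLin'_mul, hE]
      ext x
      simp
    let B := Module.finBasis k (n → F)
    have : (Matrix.toLin' t.toMatrix).restrictScalars k = LinearMap.id + N := by
      rw [hTM]
      ext x i
      simp [N, Matrix.toLin'_apply, Matrix.add_mulVec]
    rw [this, ← LinearMap.det_toMatrix B, map_add, LinearMap.toMatrix_id]
    apply aux_det_one_add_nilpotent
    refine ⟨2, ?_⟩
    rw [pow_two, ← LinearMap.toMatrix_comp B B B, hNN, map_zero]
  | hmul A B hA hB =>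
    rw [Matrix.toLin'_mul, LinearMap.restrictScalars_comp, LinearMap.det_comp, hA, hB,
      Matrix.det_mul, _root_.map_mul]

open Matrix Module in
/-- Transitivity of norms: `N_{T/k} = N_{F/k} ∘ N_{T/F}` when `T` is free over `F`. -/
lemma aux_norm_tower {k F T : Type*} [Field k] [Field F] [CommRing T] [Algebra k F] [Algebra k T]
    [Algebra F T] [IsScalarTower k F T] [FiniteDimensional k F]
    {ι : Type*} [Fintype ι] [DecidableEq ι] (c : Basis ι F T) (x : T) :
    Algebra.norm k x = Algebra.norm k (Algebra.norm F x) := by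
  classical
  set M := Algebra.leftMulMatrix c x with hM
  have hNF : Algebra.norm F x = M.det := Algebra.norm_eq_matrix_det c x
  have key : (LinearMap.mulLeft F x : T →ₗ[F] T)
      = (c.equivFun.symm : (ι → F) →ₗ[F] T) ∘ₗ (Matrix.toLin' M)
        ∘ₗ (c.equivFun : T →ₗ[F] (ι → F)) := by
    ext y
    apply c.equivFun.injective
    simp only [LinearMap.coe_comp, Function.comp_apply, LinearEquiv.coe_coe,
      LinearEquiv.apply_symm_apply, LinearMap.mulLeft_apply]
    funext i
    rw [Basis.equivFun_apply, Basis.equivFun_apply, Matrix.toLin'_apply, hM,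
      Algebra.leftMulMatrix_mulVec_repr]
  have h1 : Algebra.norm k x = LinearMap.det ((LinearMap.mulLeft F x).restrictScalars k) := by
    rw [Algebra.norm_apply]
    congr 1
  rw [h1, key]
  have h2 : ((c.equivFun.symm : (ι → F) →ₗ[F] T) ∘ₗ (Matrix.toLin' M)
        ∘ₗ (c.equivFun : T →ₗ[F] (ι → F))).restrictScalars k
      = ((c.equivFun.restrictScalars k).symm : (ι → F) →ₗ[k] T)
        ∘ₗ ((Matrix.toLin' M).restrictScalars k)
        ∘ₗ ((c.equivFun.restrictScalars k) : T →ₗ[k] (ι → F)) := rfl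
  rw [h2]
  rw [show ((c.equivFun.restrictScalars k).symm : (ι → F) →ₗ[k] T)
        ∘ₗ ((Matrix.toLin' M).restrictScalars k)
        ∘ₗ ((c.equivFun.restrictScalars k) : T →ₗ[k] (ι → F))
      = ((c.equivFun.restrictScalars k).symm : (ι → F) →ₗ[k] T)
        ∘ₗ ((Matrix.toLin' M).restrictScalars k)
        ∘ₗ (((c.equivFun.restrictScalars k).symm.symm) : T →ₗ[k] (ι → F)) from rfl]
  rw [LinearMap.det_conj ((Matrix.toLin' M).restrictScalars k)
    (c.equivFun.restrictScalars k).symm]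
  rw [aux_det_restrict_toLin', hNF]

open Matrix Module in
/-- Norm of a product algebra is the product of the norms. -/
lemma aux_norm_prodAlg {F A B : Type*} [Field F] [CommRing A] [CommRing B] [Algebra F A]
    [Algebra F B] [Module.Finite F A] [Module.Finite F B] (x : A) (y : B) :
    Algebra.norm F ((x, y) : A × B) = Algebra.norm F x * Algebra.norm F y := by
  classical
  let bA := Module.finBasis F A
  let bB := Module.finBasis F B
  rw [Algebra.norm_eq_matrix_det (bA.prod bB), Algebra.norm_eq_matrix_det bA,
    Algebra.norm_eq_matrix_det bB]
  have : Algebra.leftMulMatrix (bA.prod bB) (x, y)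
      = Matrix.fromBlocks (Algebra.leftMulMatrix bA x) 0 0 (Algebra.leftMulMatrix bB y) := by
    ext i j
    rcases i with i | i <;> rcases j with j | j <;>
      simp only [Algebra.leftMulMatrix_eq_repr_mul, Matrix.fromBlocks_apply₁₁,
        Matrix.fromBlocks_apply₁₂, Matrix.fromBlocks_apply₂₁, Matrix.fromBlocks_apply₂₂,
        Basis.prod_apply, Basis.prod_repr_inl, Basis.prod_repr_inr] <;>
      simp [Prod.mul_def]
  rw [this, Matrix.det_fromBlocks_zero₁₂]

lemma aux_isBaseNorm_iff {k L F : Type} [Field k] [Field L] [Field F]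
    [Algebra k L] [Algebra k F] (β : k) :
    IsBaseNorm k L F β ↔
      ∃ y : (F ⊗[k] L)ˣ, Algebra.norm F (y : F ⊗[k] L) = algebraMap k F β := by
  letI : Algebra F (L ⊗[k] F) :=
    (Algebra.TensorProduct.includeRight (R := k) (A := L) (B := F)).toRingHom.toAlgebra
  let e : (L ⊗[k] F) ≃+* (F ⊗[k] L) := (Algebra.TensorProduct.comm k L F).toRingEquiv
  have he : (algebraMap F (F ⊗[k] L)).comp (RingEquiv.refl F : F →+* F)
      = (e : (L ⊗[k] F) →+* (F ⊗[k] L)).comp (algebraMap F (L ⊗[k] F)) := by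
    ext f
    show (f ⊗ₜ[k] (1 : L)) = e ((1 : L) ⊗ₜ[k] f)
    simp [e]
  have hnorm : ∀ z : L ⊗[k] F, Algebra.norm F z = Algebra.norm F (e z) := by
    intro z
    have := Algebra.norm_eq_of_equiv_equiv (RingEquiv.refl F) e he z
    simpa using this
  constructor
  · rintro ⟨x, hx⟩
    exact ⟨Units.map (e : (L ⊗[k] F) ≃* (F ⊗[k] L)).toMonoidHom x, by
      simpa [← hnorm] using hx⟩
  · rintro ⟨y, hy⟩
    refine ⟨Units.map ((e.symm : (F ⊗[k] L) ≃* (L ⊗[k] F))).toMonoidHom y, ?_⟩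
    have : Algebra.norm F ((e.symm y : L ⊗[k] F)) = Algebra.norm F (e (e.symm y)) :=
      hnorm _
    simpa [this] using hy

open Module in
set_option maxHeartbeats 1000000 in
lemma aux_exists_norm_tensor_self {k L : Type} [Field k] [Field L] [Algebra k L]
    [FiniteDimensional k L] [Algebra.IsSeparable k L] (β : kˣ) :
    ∃ x : (L ⊗[k] L)ˣ, Algebra.norm L (x : L ⊗[k] L) = algebraMap k L (β : k) := by
  classical
  haveI : Algebra.FormallyUnramified k L := Algebra.FormallyUnramified.of_isSeparable k L
  set S := L ⊗[k] L with hS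
  obtain ⟨t, ht1, ht2⟩ :=
    (Algebra.FormallyUnramified.iff_exists_tensorProduct (R := k) (S := L)).mp inferInstance
  haveI : Module.Finite L S := Module.Finite.of_basis ((Module.finBasis k L).baseChange L)
  let μ : S →ₐ[L] L := Algebra.TensorProduct.lmul'' k
  have hμt : μ t = 1 := ht2
  have hμtm : ∀ a b : L, μ (a ⊗ₜ[k] b) = a * b := fun a b =>
    Algebra.TensorProduct.lmul'_apply_tmul a b
  have hkill : ∀ x ∈ RingHom.ker μ.toRingHom, x * t = 0 := by
    have hker : RingHom.ker μ.toRingHom = KaehlerDifferential.ideal k L := rfl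
    rw [hker, ← KaehlerDifferential.span_range_eq_ideal]
    intro x hx
    refine Submodule.span_induction ?_ ?_ ?_ ?_ hx
    · rintro _ ⟨s, rfl⟩; exact ht1 s
    · simp
    · intro a b _ _ ha hb
      rw [add_mul, ha, hb, add_zero]
    · intro a x _ hx
      rw [smul_eq_mul, mul_assoc, hx, mul_zero]
  have h1t : (1 : S) - t ∈ RingHom.ker μ.toRingHom := by
    rw [RingHom.mem_ker]
    simp [hμt]
  have htt : t * t = t := by
    have := hkill _ h1t
    rw [sub_mul, one_mul, sub_eq_zero] at this
    exact this.symm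
  set I : Ideal S := Ideal.span {t}
  set J : Ideal S := Ideal.span {1 - t}
  set b : S := algebraMap k S (β : k) with hb
  set b' : S := algebraMap k S ((β⁻¹ : kˣ) : k) with hb'
  have hbb' : b * b' = 1 := by
    rw [hb, hb', ← map_mul]
    norm_num
  have hmul : (1 + (b - 1) * t) * (1 + (b' - 1) * t)
      = 1 + (b * b' - 1) * t + ((b - 1) * (b' - 1)) * (t * t - t) := by ring
  rw [htt, hbb'] at hmul
  simp only [sub_self, mul_zero, zero_mul, add_zero] at hmul
  set x : S := 1 + (b - 1) * t
  set x' : S := 1 + (b' - 1) * t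
  have hx : x * x' = 1 := hmul
  refine ⟨⟨x, x', hx, by rw [mul_comm]; exact hx⟩, ?_⟩
  let f : S →+* (S ⧸ I) × (S ⧸ J) := (Ideal.Quotient.mk I).prod (Ideal.Quotient.mk J)
  have hfbij : Function.Bijective f := by
    constructor
    · intro u v huv
      have h1 : Ideal.Quotient.mk I u = Ideal.Quotient.mk I v := congrArg Prod.fst huv
      have h2 : Ideal.Quotient.mk J u = Ideal.Quotient.mk J v := congrArg Prod.snd huv
      rw [Ideal.Quotient.eq] at h1 h2
      obtain ⟨a, ha⟩ := Ideal.mem_span_singleton'.mp h1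
      obtain ⟨c, hc⟩ := Ideal.mem_span_singleton'.mp h2
      have e1 : (u - v) * t = u - v := by
        nth_rewrite 1 [← ha]
        rw [mul_assoc, htt, ha]
      have e2 : (u - v) * t = 0 := by
        rw [← hc, mul_assoc, sub_mul, one_mul, htt, sub_self, mul_zero]
      have : u - v = 0 := by rw [← e1, e2]
      exact sub_eq_zero.mp this
    · intro ⟨u, v⟩
      obtain ⟨a, rfl⟩ := Ideal.Quotient.mk_surjective u
      obtain ⟨c, rfl⟩ := Ideal.Quotient.mk_surjective v
      refine ⟨c * t + a * (1 - t), ?_⟩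
      have h1 : Ideal.Quotient.mk I (c * t + a * (1 - t)) = Ideal.Quotient.mk I a := by
        rw [Ideal.Quotient.eq]
        have : c * t + a * (1 - t) - a = (c - a) * t := by ring
        rw [this]
        exact Ideal.mul_mem_left _ _ (Ideal.subset_span rfl)
      have h2 : Ideal.Quotient.mk J (c * t + a * (1 - t)) = Ideal.Quotient.mk J c := by
        rw [Ideal.Quotient.eq]
        have : c * t + a * (1 - t) - c = (a - c) * (1 - t) + (c * (t * t - t)) * 0 := by
          ring
        rw [this]
        simp only [mul_zero, add_zero]
        exact Ideal.mul_mem_left _ _ (Ideal.subset_span rfl)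
      exact Prod.ext h1 h2
  let F : S ≃+* (S ⧸ I) × (S ⧸ J) := RingEquiv.ofBijective f hfbij
  have hnorm : ∀ z : S, Algebra.norm L z = Algebra.norm L (F z) := by
    intro z
    have he : (algebraMap L ((S ⧸ I) × (S ⧸ J))).comp (RingEquiv.refl L : L →+* L)
        = (F : S →+* (S ⧸ I) × (S ⧸ J)).comp (algebraMap L S) := by
      ext l <;> rfl
    have := Algebra.norm_eq_of_equiv_equiv (RingEquiv.refl L) F he z
    simpa using this
  rw [hnorm x]
  have hFx : F x = (Ideal.Quotient.mk I x, Ideal.Quotient.mk J x) := rfl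
  have hIx : Ideal.Quotient.mk I x = 1 := by
    rw [← sub_eq_zero, ← map_one (Ideal.Quotient.mk I), ← map_sub,
      Ideal.Quotient.eq_zero_iff_mem]
    have : x - 1 = (b - 1) * t := by ring
    rw [this]
    exact Ideal.mul_mem_left _ _ (Ideal.subset_span rfl)
  have hJx : Ideal.Quotient.mk J x = Ideal.Quotient.mk J b := by
    rw [Ideal.Quotient.eq]
    have : x - b = (-(b - 1)) * (1 - t) := by ring
    rw [this]
    exact Ideal.mul_mem_left _ _ (Ideal.subset_span rfl)
  rw [hFx, hIx, hJx, aux_norm_prodAlg, map_one, one_mul]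
  have hμsurj : Function.Surjective μ := fun l => ⟨algebraMap L S l, by
    simpa using μ.commutes l⟩
  have hJker : RingHom.ker μ.toRingHom = J := by
    apply le_antisymm
    · intro z hz
      have hz0 := hkill z hz
      have : z = z * (1 - t) := by
        rw [mul_sub, mul_one, hz0, sub_zero]
      rw [this]
      exact Ideal.mul_mem_left _ _ (Ideal.subset_span rfl)
    · rw [Ideal.span_le]
      rintro _ rfl
      exact h1t
  let ψ : (S ⧸ J) ≃ₐ[L] L :=
    (Ideal.quotientEquivAlgOfEq L hJker.symm).trans
      (Ideal.quotientKerAlgEquivOfSurjective hμsurj)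
  have hψ : ψ (Ideal.Quotient.mk J b) = algebraMap k L (β : k) := by
    have : ψ (Ideal.Quotient.mk J b) = μ b := by
      simp [ψ, Ideal.quotientEquivAlgOfEq_mk]
      rfl
    rw [this, hb]
    have : algebraMap k S (β : k) = (algebraMap k L (β : k)) ⊗ₜ[k] 1 := rfl
    rw [this, hμtm, mul_one]
  rw [← Algebra.norm_eq_of_algEquiv ψ, hψ]
  have : algebraMap k L (β : k) = algebraMap L L (algebraMap k L (β : k)) := rfl
  nth_rewrite 1 [this]
  rw [Algebra.norm_algebraMap]
  simp

open Module in
lemma aux_transfer {k L F : Type} [Field k] [Field L] [Field F] [Algebra k L] [Algebra k F]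
    [FiniteDimensional k L] [FiniteDimensional k F] {β : k}
    (h : IsBaseNorm k L F β) :
    ∃ u : Lˣ, Algebra.norm k (u : L) = β ^ (Module.finrank k F) := by
  classical
  rw [aux_isBaseNorm_iff] at h
  obtain ⟨y, hy⟩ := h
  let e : (F ⊗[k] L) ≃ₐ[k] (L ⊗[k] F) := Algebra.TensorProduct.comm k F L
  let x : (L ⊗[k] F)ˣ := Units.map (e : (F ⊗[k] L) ≃* (L ⊗[k] F)).toMonoidHom y
  have hxy : Algebra.norm k ((x : L ⊗[k] F)) = Algebra.norm k ((y : F ⊗[k] L)) :=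
    Algebra.norm_eq_of_algEquiv e _
  have h1 : Algebra.norm k ((y : F ⊗[k] L)) = β ^ (Module.finrank k F) := by
    rw [aux_norm_tower ((Module.finBasis k L).baseChange F), hy, Algebra.norm_algebraMap]
  refine ⟨Units.map (Algebra.norm L) x, ?_⟩
  have h2 : Algebra.norm k ((x : L ⊗[k] F)) =
      Algebra.norm k (Algebra.norm L ((x : L ⊗[k] F))) :=
    aux_norm_tower ((Module.finBasis k F).baseChange L) _
  show Algebra.norm k (Algebra.norm L ((x : L ⊗[k] F))) = β ^ (Module.finrank k F)
  rw [← h2, hxy, h1]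

theorem stmt11 (k L : Type) [Field k] [Field L] [Algebra k L]
    [FiniteDimensional k L] [Algebra.IsSeparable k L]
    (p : ℕ) (hp : p.Prime) (hd : Module.finrank k L = p) (β : kˣ) :
    ∃ (F : Type) (_ : Field F) (_ : Algebra k F),
      FiniteDimensional k F ∧ Algebra.IsSeparable k F ∧
      (Module.finrank k F = 1 ∨ Module.finrank k F = p) ∧
      IsBaseNorm k L F (β : k) ∧
      ∀ (F' : Type) (_ : Field F') (_ : Algebra k F'),
        FiniteDimensional k F' → Algebra.IsSeparable k F' →
        IsBaseNorm k L F' (β : k) →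
        Module.finrank k F ∣ Module.finrank k F' := by
  classical
  set H : Subgroup kˣ := (Units.map (Algebra.norm k : L →* k)).range with hH
  by_cases hβ : β ∈ H
  · -- β is a norm from L: take F = k
    obtain ⟨v, hv⟩ := hβ
    refine ⟨k, inferInstance, inferInstance, inferInstance, inferInstance,
      Or.inl (Module.finrank_self k), ?_, ?_⟩
    · rw [aux_isBaseNorm_iff]
      let e : (k ⊗[k] L) ≃ₐ[k] L := Algebra.TensorProduct.lid k L
      refine ⟨Units.map (e.symm : L ≃* k ⊗[k] L).toMonoidHom v, ?_⟩
      have : Algebra.norm k ((e.symm v : k ⊗[k] L)) = Algebra.norm k (e (e.symm v)) :=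
        (Algebra.norm_eq_of_algEquiv e _).symm
      rw [show ((Units.map (e.symm : L ≃* k ⊗[k] L).toMonoidHom v : (k ⊗[k] L)ˣ) : k ⊗[k] L)
          = (e.symm (v : L)) from rfl, this]
      simp only [AlgEquiv.apply_symm_apply]
      have hv' : Algebra.norm k (v : L) = (β : k) := congrArg Units.val hv
      rw [hv']
      simp
    · intro F' _ _ _ _ _
      rw [Module.finrank_self]
      exact one_dvd _
  · -- β is not a norm from L: take F = L
    refine ⟨L, inferInstance, inferInstance, inferInstance, inferInstance,
      Or.inr hd, ?_, ?_⟩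
    · rw [aux_isBaseNorm_iff]
      exact aux_exists_norm_tensor_self β
    · intro F' _ _ _ _ hBN
      rw [hd]
      by_contra hndvd
      obtain ⟨u, hu⟩ := aux_transfer hBN
      set d' := Module.finrank k F' with hd'
      have h1 : (β ^ (d' : ℕ) : kˣ) ∈ H := by
        refine ⟨u, Units.ext ?_⟩
        push_cast
        rw [show ((Units.map (Algebra.norm k : L →* k) u : kˣ) : k)
            = Algebra.norm k (u : L) from rfl, hu]
      have h2 : (β ^ p : kˣ) ∈ H := by
        refine ⟨Units.map (algebraMap k L : k →+* L).toMonoidHom β, Units.ext ?_⟩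
        push_cast
        rw [show ((Units.map (Algebra.norm k : L →* k)
              (Units.map (algebraMap k L : k →+* L).toMonoidHom β) : kˣ) : k)
            = Algebra.norm k (algebraMap k L (β : k)) from rfl]
        rw [Algebra.norm_algebraMap, hd]
      have hc : Nat.Coprime p d' := (Nat.Prime.coprime_iff_not_dvd hp).mpr hndvd
      have hbez : (p : ℤ) * Nat.gcdA p d' + (d' : ℤ) * Nat.gcdB p d' = 1 := by
        have := Nat.gcd_eq_gcd_ab p d'
        rw [hc.gcd_eq_one] at this
        exact_mod_cast this.symm
      have hβmem : β ∈ H := by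
        have : β = (β ^ p) ^ (Nat.gcdA p d') * (β ^ (d' : ℕ)) ^ (Nat.gcdB p d') := by
          rw [← zpow_natCast β p, ← zpow_natCast β d', ← zpow_mul, ← zpow_mul,
            ← zpow_add, hbez, zpow_one]
        rw [this]
        exact mul_mem (Subgroup.zpow_mem H h2 _) (Subgroup.zpow_mem H h1 _)
      exact hβ hβmem
end

section
/- Let k be a field with separable closure k^s, let L/k be a finite separable field extension of degree 6, and let K₁, K₂ be intermediate fields of L/k with [L:K₁] = 2, [K₁:k] = 3, [L:K₂] = 3, [K₂:k] = 2. Let σ be the nontrivial K₁-automorphism of L. Then for every unit β of L ⊗_k k^s satisfying N_{(L⊗_k k^s)/(K₁⊗_k k^s)}(β) = 1 and N_{(L⊗_k k^s)/(K₂⊗_k k^s)}(β) = 1, there exists a unit α of L ⊗_k k^s such that N_{(L⊗_k k^s)/(K₂⊗_k k^s)}(α) = 1 and (σ ⊗ id)(α) · α⁻¹ = β. -/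
set_option maxHeartbeats 1600000
set_option synthInstance.maxHeartbeats 400000

open TensorProduct

section PiNorm

variable {R ι ι' κ : Type} [CommRing R] [Fintype ι'] [Fintype κ]
  [DecidableEq ι'] [DecidableEq κ]

theorem pi_norm [alg : Algebra (ι' → R) (ι → R)] (c : ι ≃ ι' × κ)
    (halg : ∀ (v : ι' → R) (i : ι), algebraMap (ι' → R) (ι → R) v i = v (c i).1)
    (x : ι → R) (g : ι') :
    Algebra.norm (ι' → R) x g = ∏ a : κ, x (c.symm (g, a)) := by
  classical
  let ε : (ι → R) ≃ₗ[ι' → R] (κ → (ι' → R)) :=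
    { toFun := fun x a g => x (c.symm (g, a))
      invFun := fun y i => y (c i).2 (c i).1
      map_add' := fun x y => rfl
      map_smul' := by
        intro v x
        funext a g
        simp only [RingHom.id_apply, Pi.smul_apply, smul_eq_mul]
        rw [Algebra.smul_def]
        simp only [Pi.mul_apply]
        rw [halg]
        simp
      left_inv := by
        intro x; funext i; simp
      right_inv := by
        intro y; funext a g; simp }
  let b : Module.Basis κ (ι' → R) (ι → R) := Module.Basis.ofEquivFun ε
  rw [Algebra.norm_eq_matrix_det b]
  have hdiag : Algebra.leftMulMatrix b x =
      Matrix.diagonal (fun a => fun g => x (c.symm (g, a))) := by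
    ext a a'
    rw [Algebra.leftMulMatrix_eq_repr_mul]
    have hrepr : b.repr (x * b a') a = ε (x * b a') a := by
      simp [b]
    rw [hrepr]
    have hba' : b a' = ε.symm (Pi.single a' 1) := by
      simp [b, Module.Basis.ofEquivFun]
    by_cases h : a = a' <;>
      simp [Matrix.diagonal_apply, h, ε, hba', Pi.single_apply]
  rw [hdiag, Matrix.det_diagonal]
  simp [Finset.prod_apply]

end PiNorm

section Split

variable (k ks : Type) [Field k] [Field ks] [Algebra k ks] [IsSepClosure k ks]
variable (X : Type) [Field X] [Algebra k X] [FiniteDimensional k X]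
  [Algebra.IsSeparable k X]

noncomputable def splitAlgHom : ks ⊗[k] X →ₐ[ks] ((X →ₐ[k] ks) → ks) :=
  Algebra.TensorProduct.lift (Algebra.ofId ks _) (Pi.algHom k _ (fun f => f))
    (fun _ _ => Commute.all _ _)

lemma splitAlgHom_tmul (s : ks) (x : X) :
    splitAlgHom k ks X (s ⊗ₜ x) = fun f => s * f x := by
  funext f
  simp [splitAlgHom, Algebra.ofId, Algebra.algebraMap_eq_smul_one, Pi.smul_apply, smul_eq_mul]

lemma splitAlgHom_bijective : Function.Bijective (splitAlgHom k ks X) := by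
  classical
  haveI : IsSepClosed ks := IsSepClosure.sep_closed k
  have hcard : Fintype.card (X →ₐ[k] ks) = Module.finrank k X :=
    AlgHom.card_of_splits k X ks
      (fun x => IsSepClosed.splits_codomain _ (Algebra.IsSeparable.isSeparable k x))
  have hsurj : Function.Surjective (splitAlgHom k ks X) := by
    suffices h : Function.Surjective ⇑(splitAlgHom k ks X).toLinearMap from h
    rw [← LinearMap.range_eq_top (f := (splitAlgHom k ks X).toLinearMap)]
    by_contra hne
    obtain ⟨φ, hφ0, hφ⟩ := Submodule.exists_dual_map_eq_bot_of_lt_top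
      (lt_top_iff_ne_top.2 hne) inferInstance
    set cf : (X →ₐ[k] ks) → ks := fun f => φ (fun j => if f = j then 1 else 0) with hcf
    have hφy : ∀ y : (X →ₐ[k] ks) → ks, φ y = ∑ f, y f * cf f := by
      intro y
      conv_lhs => rw [pi_eq_sum_univ y]
      rw [map_sum]
      refine Finset.sum_congr rfl (fun f _ => ?_)
      rw [map_smul, smul_eq_mul]
    have hvanish : ∀ z, φ (splitAlgHom k ks X z) = 0 := by
      intro z
      have hm : φ (splitAlgHom k ks X z) ∈
          Submodule.map φ (LinearMap.range (splitAlgHom k ks X).toLinearMap) :=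
        Submodule.mem_map_of_mem ⟨z, rfl⟩
      rw [hφ] at hm
      exact (Submodule.mem_bot ks).mp hm
    have hli : LinearIndependent ks (fun f : X →ₐ[k] ks => (f : X → ks)) := by
      have h1 := linearIndependent_monoidHom X ks
      have h2 : Function.Injective (fun f : X →ₐ[k] ks => (f : X →* ks)) := by
        intro f g h
        ext x
        exact congrArg (fun F => F x) h  -- may need fixing
      exact h1.comp _ h2
    have hsum : ∑ f : X →ₐ[k] ks, cf f • (f : X → ks) = 0 := by
      funext x
      have := hvanish (1 ⊗ₜ x)
      rw [splitAlgHom_tmul, hφy] at this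
      simpa [Finset.sum_apply, mul_comm] using this
    have hc0 : ∀ f, cf f = 0 := by
      have := Fintype.linearIndependent_iff.mp hli (fun f => cf f) hsum
      exact this
    apply hφ0
    apply LinearMap.ext
    intro y
    rw [hφy]
    simp [hc0]
  constructor
  · suffices h : Function.Injective ⇑(splitAlgHom k ks X).toLinearMap from h
    rw [← LinearMap.ker_eq_bot (f := (splitAlgHom k ks X).toLinearMap)]
    have hrank : Module.finrank ks (ks ⊗[k] X) = Module.finrank ks ((X →ₐ[k] ks) → ks) := by
      rw [Module.finrank_baseChange, Module.finrank_pi, hcard]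
    have := LinearMap.finrank_range_add_finrank_ker (splitAlgHom k ks X).toLinearMap
    rw [show LinearMap.range (splitAlgHom k ks X).toLinearMap = ⊤ from
      LinearMap.range_eq_top.2 hsurj, finrank_top] at this
    rw [← hrank] at this
    have hker0 : Module.finrank ks (LinearMap.ker (splitAlgHom k ks X).toLinearMap) = 0 := by
      omega
    exact Submodule.finrank_eq_zero.mp hker0
  · exact hsurj

end Split

section Split2

variable (k ks : Type) [Field k] [Field ks] [Algebra k ks] [IsSepClosure k ks]
variable (X : Type) [Field X] [Algebra k X] [FiniteDimensional k X]
  [Algebra.IsSeparable k X]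

noncomputable def splitEquiv : (X ⊗[k] ks) ≃+* ((X →ₐ[k] ks) → ks) :=
  (Algebra.TensorProduct.comm k X ks).toRingEquiv.trans
    (RingEquiv.ofBijective (splitAlgHom k ks X).toRingHom (splitAlgHom_bijective k ks X))

lemma splitEquiv_tmul (x : X) (s : ks) :
    splitEquiv k ks X (x ⊗ₜ s) = fun f => s * f x := by
  show (splitAlgHom k ks X) ((Algebra.TensorProduct.comm k X ks) (x ⊗ₜ s)) = _
  rw [Algebra.TensorProduct.comm_tmul, splitAlgHom_tmul]

variable (Y : Type) [Field Y] [Algebra k Y] [FiniteDimensional k Y]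
  [Algebra.IsSeparable k Y]

lemma splitEquiv_map (j : X →ₐ[k] Y) (z : X ⊗[k] ks) :
    splitEquiv k ks Y (Algebra.TensorProduct.map j (AlgHom.id k ks) z)
      = (splitEquiv k ks X z) ∘ (fun f : Y →ₐ[k] ks => f.comp j) := by
  induction z with
  | zero => simp [map_zero]
  | add z w hz hw =>
      rw [map_add, map_add, map_add, hz, hw]
      rfl
  | tmul x s =>
      rw [Algebra.TensorProduct.map_tmul, splitEquiv_tmul, splitEquiv_tmul]
      funext f
      simp

end Split2

section Fiber

variable (k ks L : Type) [Field k] [Field ks] [Field L]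
    [Algebra k ks] [IsSepClosure k ks] [Algebra k L]
    [FiniteDimensional k L] [Algebra.IsSeparable k L]

lemma card_fiber (K : IntermediateField k L) (g : ↥K →ₐ[k] ks) :
    Nat.card {f : L →ₐ[k] ks // f.comp K.val = g} = Module.finrank ↥K L := by
  classical
  haveI : IsSepClosed ks := IsSepClosure.sep_closed k
  haveI : FiniteDimensional ↥K L := FiniteDimensional.right k ↥K L
  haveI : Algebra.IsSeparable ↥K L := Algebra.isSeparable_tower_top_of_isSeparable k ↥K L
  letI : Algebra ↥K ks := g.toRingHom.toAlgebra
  haveI : IsScalarTower k ↥K ks :=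
    IsScalarTower.of_algebraMap_eq (fun c => (g.commutes c).symm)
  let e : {f : L →ₐ[k] ks // f.comp K.val = g} ≃ (L →ₐ[↥K] ks) :=
    { toFun := fun f =>
        { toRingHom := (f.1 : L →+* ks)
          commutes' := fun c => congrArg (fun F => F c) f.2 }
      invFun := fun F => ⟨F.restrictScalars k, by ext c; exact F.commutes c⟩
      left_inv := fun f => by ext; rfl
      right_inv := fun F => by ext; rfl }
  rw [Nat.card_congr e, Nat.card_eq_fintype_card]
  rw [AlgHom.card_of_splits ↥K L ks
    (fun x => IsSepClosed.splits_codomain _ (Algebra.IsSeparable.isSeparable ↥K x))]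

end Fiber

lemma exists_prodEquiv {ι ι' : Type} [Finite ι] (r : ι → ι') {m : ℕ}
    (h : ∀ g, Nat.card {i // r i = g} = m) :
    ∃ c : ι ≃ ι' × Fin m, ∀ i, (c i).1 = r i := by
  classical
  have e : ∀ g, {i // r i = g} ≃ Fin m := fun g => Finite.equivFinOfCardEq (h g)
  refine ⟨(Equiv.sigmaFiberEquiv r).symm.trans
    ((Equiv.sigmaCongrRight e).trans (Equiv.sigmaEquivProd ι' (Fin m))), fun i => rfl⟩

theorem stmt14 (k ks L : Type) [Field k] [Field ks] [Field L]
    [Algebra k ks] [IsSepClosure k ks] [Algebra k L]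
    [FiniteDimensional k L] [Algebra.IsSeparable k L]
    (hdeg : Module.finrank k L = 6)
    (K₁ K₂ : IntermediateField k L)
    (h1 : Module.finrank (↥K₁) L = 2) (h2 : Module.finrank k (↥K₁) = 3)
    (h3 : Module.finrank (↥K₂) L = 3) (h4 : Module.finrank k (↥K₂) = 2)
    (σ : L ≃ₐ[↥K₁] L) (hσ : σ ≠ AlgEquiv.refl) :
    letI : Algebra ((↥K₁) ⊗[k] ks) (L ⊗[k] ks) :=
      ((Algebra.TensorProduct.map K₁.val (AlgHom.id k ks)).toRingHom).toAlgebra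
    letI : Algebra ((↥K₂) ⊗[k] ks) (L ⊗[k] ks) :=
      ((Algebra.TensorProduct.map K₂.val (AlgHom.id k ks)).toRingHom).toAlgebra
    ∀ β : (L ⊗[k] ks)ˣ,
      Algebra.norm ((↥K₁) ⊗[k] ks) (β : L ⊗[k] ks) = 1 →
      Algebra.norm ((↥K₂) ⊗[k] ks) (β : L ⊗[k] ks) = 1 →
      ∃ α : (L ⊗[k] ks)ˣ,
        Algebra.norm ((↥K₂) ⊗[k] ks) (α : L ⊗[k] ks) = 1 ∧
        (Algebra.TensorProduct.map (AlgHom.restrictScalars k σ.toAlgHom) (AlgHom.id k ks))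
            (α : L ⊗[k] ks) * ((α⁻¹ : (L ⊗[k] ks)ˣ) : L ⊗[k] ks)
          = (β : L ⊗[k] ks) := by
  classical
  letI iA1 : Algebra ((↥K₁) ⊗[k] ks) (L ⊗[k] ks) :=
    ((Algebra.TensorProduct.map K₁.val (AlgHom.id k ks)).toRingHom).toAlgebra
  letI iA2 : Algebra ((↥K₂) ⊗[k] ks) (L ⊗[k] ks) :=
    ((Algebra.TensorProduct.map K₂.val (AlgHom.id k ks)).toRingHom).toAlgebra
  intro β hN1 hN2
  haveI : IsSepClosed ks := IsSepClosure.sep_closed k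
  haveI : FiniteDimensional k ↥K₁ := FiniteDimensional.left k ↥K₁ L
  haveI : FiniteDimensional k ↥K₂ := FiniteDimensional.left k ↥K₂ L
  haveI : Algebra.IsSeparable k ↥K₁ := Algebra.isSeparable_tower_bot_of_isSeparable k ↥K₁ L
  haveI : Algebra.IsSeparable k ↥K₂ := Algebra.isSeparable_tower_bot_of_isSeparable k ↥K₂ L
  set E := splitEquiv k ks L with hE
  set E₁ := splitEquiv k ks ↥K₁ with hE₁
  set E₂ := splitEquiv k ks ↥K₂ with hE₂
  set r₁ : (L →ₐ[k] ks) → (↥K₁ →ₐ[k] ks) := fun f => f.comp K₁.val with hr₁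
  set r₂ : (L →ₐ[k] ks) → (↥K₂ →ₐ[k] ks) := fun f => f.comp K₂.val with hr₂
  letI iP1 : Algebra ((↥K₁ →ₐ[k] ks) → ks) ((L →ₐ[k] ks) → ks) :=
    (Pi.ringHom fun f => Pi.evalRingHom (fun _ => ks) (r₁ f)).toAlgebra
  letI iP2 : Algebra ((↥K₂ →ₐ[k] ks) → ks) ((L →ₐ[k] ks) → ks) :=
    (Pi.ringHom fun f => Pi.evalRingHom (fun _ => ks) (r₂ f)).toAlgebra
  have he1 : (algebraMap ((↥K₁ →ₐ[k] ks) → ks) ((L →ₐ[k] ks) → ks)).comp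
      (@RingEquiv.toRingHom _ _ CommSemiring.toSemiring.toNonAssocSemiring _ E₁) =
      (E : L ⊗[k] ks →+* ((L →ₐ[k] ks) → ks)).comp
        (algebraMap ((↥K₁) ⊗[k] ks) (L ⊗[k] ks)) :=
    RingHom.ext fun z => (splitEquiv_map k ks ↥K₁ L K₁.val z).symm
  have he2 : (algebraMap ((↥K₂ →ₐ[k] ks) → ks) ((L →ₐ[k] ks) → ks)).comp
      (@RingEquiv.toRingHom _ _ CommSemiring.toSemiring.toNonAssocSemiring _ E₂) =
      (E : L ⊗[k] ks →+* ((L →ₐ[k] ks) → ks)).comp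
        (algebraMap ((↥K₂) ⊗[k] ks) (L ⊗[k] ks)) :=
    RingHom.ext fun z => (splitEquiv_map k ks ↥K₂ L K₂.val z).symm
  have hfib1 : ∀ g : ↥K₁ →ₐ[k] ks, Nat.card {f : L →ₐ[k] ks // r₁ f = g} = 2 :=
    fun g => (card_fiber k ks L K₁ g).trans h1
  have hfib2 : ∀ g : ↥K₂ →ₐ[k] ks, Nat.card {f : L →ₐ[k] ks // r₂ f = g} = 3 :=
    fun g => (card_fiber k ks L K₂ g).trans h3
  obtain ⟨c₁, hc₁⟩ := exists_prodEquiv r₁ hfib1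
  obtain ⟨c₂, hc₂⟩ := exists_prodEquiv r₂ hfib2
  have halg1 : ∀ (v : (↥K₁ →ₐ[k] ks) → ks) (i : L →ₐ[k] ks),
      algebraMap ((↥K₁ →ₐ[k] ks) → ks) ((L →ₐ[k] ks) → ks) v i = v (c₁ i).1 :=
    fun v i => congrArg v (hc₁ i).symm
  have halg2 : ∀ (v : (↥K₂ →ₐ[k] ks) → ks) (i : L →ₐ[k] ks),
      algebraMap ((↥K₂ →ₐ[k] ks) → ks) ((L →ₐ[k] ks) → ks) v i = v (c₂ i).1 :=
    fun v i => congrArg v (hc₂ i).symm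
  set x : (L →ₐ[k] ks) → ks := E (β : L ⊗[k] ks) with hxdef
  have hx0 : ∀ f, x f ≠ 0 := by
    intro f h0
    have h1' : x * E ((β⁻¹ : (L ⊗[k] ks)ˣ) : L ⊗[k] ks) = 1 := by
      rw [hxdef, ← map_mul, Units.mul_inv, map_one]
    have := congrFun h1' f
    rw [Pi.mul_apply, h0, zero_mul] at this
    exact zero_ne_one this
  have hxN1 : ∀ g, ∏ a : Fin 2, x (c₁.symm (g, a)) = 1 := by
    intro g
    have h := Algebra.norm_eq_of_equiv_equiv E₁ E he1 (β : L ⊗[k] ks)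
    rw [hN1] at h
    have h' : Algebra.norm ((↥K₁ →ₐ[k] ks) → ks) x = 1 := by
      have := congrArg E₁ h
      rw [RingEquiv.apply_symm_apply, map_one] at this
      exact this.symm
    rw [← pi_norm c₁ halg1 x g, h']
    rfl
  have hxN2 : ∀ g, ∏ a : Fin 3, x (c₂.symm (g, a)) = 1 := by
    intro g
    have h := Algebra.norm_eq_of_equiv_equiv E₂ E he2 (β : L ⊗[k] ks)
    rw [hN2] at h
    have h' : Algebra.norm ((↥K₂ →ₐ[k] ks) → ks) x = 1 := by
      have := congrArg E₂ h
      rw [RingEquiv.apply_symm_apply, map_one] at this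
      exact this.symm
    rw [← pi_norm c₂ halg2 x g, h']
    rfl
  set σ' : L →ₐ[k] L := AlgHom.restrictScalars k σ.toAlgHom with hσ'
  set P : (L →ₐ[k] ks) → (L →ₐ[k] ks) := fun f => f.comp σ' with hP
  have hinj : ∀ f : L →ₐ[k] ks, Function.Injective f := fun f => f.toRingHom.injective
  have hσfix : ∀ c : ↥K₁, σ' ↑c = ↑c := fun c => σ.commutes c
  have hPr1 : ∀ f, r₁ (P f) = r₁ f := fun f => AlgHom.ext fun c => congrArg f (hσfix c)
  have hPne : ∀ f, P f ≠ f := by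
    intro f hEq
    apply hσ
    apply AlgEquiv.ext
    intro z
    exact hinj f (AlgHom.congr_fun hEq z)
  have fin2 : ∀ a : Fin 2, a = 0 ∨ a = 1 := by decide
  have mem2 : ∀ (g : ↥K₁ →ₐ[k] ks) (f : L →ₐ[k] ks), r₁ f = g →
      f = c₁.symm (g, 0) ∨ f = c₁.symm (g, 1) := by
    intro g f hf
    have h1' : (c₁ f).1 = g := (hc₁ f).trans hf
    have hfe : f = c₁.symm (g, (c₁ f).2) := by
      conv_lhs => rw [← c₁.symm_apply_apply f]
      congr 1
      rw [← h1']
    rcases fin2 (c₁ f).2 with ha | ha <;> rw [ha] at hfe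
    · exact Or.inl hfe
    · exact Or.inr hfe
  have hpair : ∀ f, x f * x (P f) = 1 := by
    intro f
    have hprod := hxN1 (r₁ f)
    rw [Fin.prod_univ_two] at hprod
    rcases mem2 (r₁ f) f rfl with h | h <;>
      rcases mem2 (r₁ f) (P f) (hPr1 f) with h' | h'
    · exact absurd (h'.trans h.symm) (hPne f)
    · rw [← h, ← h'] at hprod; exact hprod
    · rw [← h, ← h'] at hprod; rw [mul_comm]; exact hprod
    · exact absurd (h'.trans h.symm) (hPne f)
  have hPP : ∀ f, P (P f) = f := by
    intro f
    rcases mem2 (r₁ f) f rfl with h | h <;>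
      rcases mem2 (r₁ f) (P f) (hPr1 f) with h' | h' <;>
        rcases mem2 (r₁ f) (P (P f)) ((hPr1 (P f)).trans (hPr1 f)) with h'' | h''
    all_goals first
      | exact absurd (h'.trans h.symm) (hPne f)
      | exact absurd (h''.trans h'.symm) (hPne (P f))
      | exact h''.trans h.symm
  have hcard2 : Nat.card (↥K₂ →ₐ[k] ks) = 2 := by
    rw [Nat.card_eq_fintype_card]
    rw [AlgHom.card_of_splits k ↥K₂ ks
      (fun z => IsSepClosed.splits_codomain _ (Algebra.IsSeparable.isSeparable k z))]
    exact h4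
  obtain ⟨g₀⟩ : Nonempty (↥K₂ →ₐ[k] ks) :=
    (Nat.card_pos_iff.mp (by rw [hcard2]; norm_num)).1
  have htwo : ∀ a b c : ↥K₂ →ₐ[k] ks, a ≠ b → c ≠ b → c = a := by
    intro a b c hab hcb
    set d : (↥K₂ →ₐ[k] ks) ≃ Fin 2 := Finite.equivFinOfCardEq hcard2 with hd
    apply d.injective
    have h1' : d a ≠ d b := fun h => hab (d.injective h)
    have h2' : d c ≠ d b := fun h => hcb (d.injective h)
    rcases fin2 (d a) with ha | ha <;> rcases fin2 (d b) with hb | hb <;>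
      rcases fin2 (d c) with hc | hc <;> simp [ha, hb, hc] at h1' h2' ⊢
  have hr2P : ∀ f, r₂ (P f) ≠ r₂ f := by
    intro f hEq
    have hfix2 : ∀ c : ↥K₂, σ' ↑c = ↑c := by
      intro c
      exact hinj f (AlgHom.congr_fun hEq c)
    have hld : K₁.LinearDisjoint ↥K₂ :=
      IntermediateField.LinearDisjoint.of_finrank_coprime (by rw [h2, h4]; decide)
    have hsup6 : Module.finrank k ↥(K₁ ⊔ K₂) = 6 := by
      rw [hld.finrank_sup, h2, h4]
    have hsup : K₁ ⊔ K₂ = ⊤ := by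
      apply IntermediateField.toSubalgebra_injective
      rw [IntermediateField.top_toSubalgebra]
      rw [← Algebra.toSubmodule_eq_top]
      apply Submodule.eq_top_of_finrank_eq
      rw [show Module.finrank k ↥(Subalgebra.toSubmodule (K₁ ⊔ K₂).toSubalgebra)
        = Module.finrank k ↥(K₁ ⊔ K₂) from rfl, hsup6, hdeg]
    apply hσ
    apply AlgEquiv.ext
    intro z
    have hsub : (K₁ ⊔ K₂).toSubalgebra ≤ AlgHom.equalizer σ' (AlgHom.id k L) := by
      rw [IntermediateField.sup_toSubalgebra_of_left]
      apply sup_le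
      · intro w hw
        exact hσfix ⟨w, hw⟩
      · intro w hw
        exact hfix2 ⟨w, hw⟩
    have hz : z ∈ (K₁ ⊔ K₂).toSubalgebra := by
      rw [hsup]
      exact trivial
    exact hsub hz
  set y : (L →ₐ[k] ks) → ks := fun f => if r₂ f = g₀ then 1 else x (P f) with hy
  have hy0 : ∀ f, y f ≠ 0 := by
    intro f
    by_cases h : r₂ f = g₀ <;> simp [hy, h, hx0]
  have hyP : ∀ f, y (P f) = x f * y f := by
    intro f
    by_cases h : r₂ f = g₀
    · have h2' : ¬ (r₂ (P f) = g₀) := fun hh => hr2P f (hh.trans h.symm)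
      rw [hy]
      simp only [if_neg h2', if_pos h, hPP f, mul_one]
    · have h2' : r₂ (P f) = g₀ := htwo g₀ (r₂ f) (r₂ (P f)) (fun hh => h hh.symm) (hr2P f)
      rw [hy]
      simp only [if_pos h2', if_neg h]
      exact (hpair f).symm
  set u : (((L →ₐ[k] ks) → ks))ˣ :=
    { val := y
      inv := fun f => (y f)⁻¹
      val_inv := by funext f; exact mul_inv_cancel₀ (hy0 f)
      inv_val := by funext f; exact inv_mul_cancel₀ (hy0 f) } with hu
  set α : (L ⊗[k] ks)ˣ := Units.map (E.symm.toRingHom.toMonoidHom) u with hα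
  have hαval : (α : L ⊗[k] ks) = E.symm y := rfl
  have hαinv : ((α⁻¹ : (L ⊗[k] ks)ˣ) : L ⊗[k] ks) = E.symm (fun f => (y f)⁻¹) := rfl
  have hEα : E (α : L ⊗[k] ks) = y := by rw [hαval, RingEquiv.apply_symm_apply]
  refine ⟨α, ?_, ?_⟩
  · rw [Algebra.norm_eq_of_equiv_equiv E₂ E he2 (α : L ⊗[k] ks), hEα]
    have hnorm_y : Algebra.norm ((↥K₂ →ₐ[k] ks) → ks) y = 1 := by
      funext g
      rw [pi_norm c₂ halg2 y g]
      have hrfib : ∀ (g' : ↥K₂ →ₐ[k] ks) (a : Fin 3), r₂ (c₂.symm (g', a)) = g' := by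
        intro g' a
        rw [← hc₂ (c₂.symm (g', a)), Equiv.apply_symm_apply]
      by_cases hg : g = g₀
      · subst hg
        have : ∀ a : Fin 3, y (c₂.symm (g, a)) = 1 := by
          intro a
          rw [hy]
          simp only [if_pos (hrfib g a)]
        rw [Finset.prod_congr rfl (fun a _ => this a)]
        simp
      · set ψ : Fin 3 → Fin 3 := fun a => (c₂ (P (c₂.symm (g, a)))).2 with hψ
        have hrP : ∀ a : Fin 3, r₂ (P (c₂.symm (g, a))) = g₀ := by
          intro a
          refine htwo g₀ g _ (fun hh => hg hh.symm) ?_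
          have := hr2P (c₂.symm (g, a))
          rwa [hrfib g a] at this
        have hPh : ∀ a, P (c₂.symm (g, a)) = c₂.symm (g₀, ψ a) := by
          intro a
          have hcc : c₂ (P (c₂.symm (g, a))) = (g₀, ψ a) :=
            Prod.ext ((hc₂ _).trans (hrP a)) rfl
          rw [← hcc, Equiv.symm_apply_apply]
        have hterm : ∀ a : Fin 3, y (c₂.symm (g, a)) = x (c₂.symm (g₀, ψ a)) := by
          intro a
          rw [hy]
          simp only [if_neg (fun hh => hg ((hrfib g a).symm.trans hh))]
          rw [hPh a]
        have hψinj : Function.Injective ψ := by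
          intro a b hab
          have h1' : c₂.symm (g₀, ψ a) = c₂.symm (g₀, ψ b) := by rw [hab]
          rw [← hPh a, ← hPh b] at h1'
          have h2' : c₂.symm (g, a) = c₂.symm (g, b) := by
            have := congrArg P h1'
            rwa [hPP, hPP] at this
          have := congrArg c₂ h2'
          rw [Equiv.apply_symm_apply, Equiv.apply_symm_apply] at this
          exact (Prod.ext_iff.mp this).2
        have hψbij := Finite.injective_iff_bijective.mp hψinj
        rw [Finset.prod_congr rfl (fun a _ => hterm a)]
        exact (Fintype.prod_bijective ψ hψbij (fun a => x (c₂.symm (g₀, ψ a)))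
          (fun b => x (c₂.symm (g₀, b))) (fun a => rfl)).trans (hxN2 g₀)
    rw [hnorm_y, map_one]
  · apply E.injective
    rw [map_mul, hαinv]
    have hmap : E ((Algebra.TensorProduct.map (AlgHom.restrictScalars k σ.toAlgHom)
        (AlgHom.id k ks)) (α : L ⊗[k] ks)) = (E (α : L ⊗[k] ks)) ∘ P := by
      exact splitEquiv_map k ks L L σ' (α : L ⊗[k] ks)
    rw [hmap, hEα, RingEquiv.apply_symm_apply]
    funext f
    show y (P f) * (y f)⁻¹ = x f
    rw [hyP f]
    exact mul_inv_cancel_right₀ (hy0 f) (x f)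
end
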